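/- Let g, h : Ω → ℝ be twice continuously differentiable on a domain Ω ⊆ ℝ^d with second derivatives bounded in operator norm by C. Suppose x, y ∈ Ω with the segment [y, x] ⊂ Ω, ‖x − y‖ ≤ ε₁, |h(y) − g(y)| ≤ Cε₁², |h(x) − g(x)| ≤ Cε₁², and (∇h(y) − ∇g(y))·(x − y) ≥ (1/2)·‖∇h(y) − ∇g(y)‖·‖x − y‖ with ‖x − y‖ ≥ ε₁/2. Then ‖∇h(y) − ∇g(y)‖ ≤ 16·C·ε₁. -/

import Mathlib

open scoped RealInnerProductSpace

/-- Taylor bound: if the second derivative is bounded by `C` on an open set containing the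
segment, then the first-order Taylor remainder is bounded by `C * ε₁ * ‖x - y‖`. -/
lemma taylor_aux (d : ℕ) (Ω : Set (EuclideanSpace ℝ (Fin d))) (hΩ : IsOpen Ω)
    (f : EuclideanSpace ℝ (Fin d) → ℝ) (C ε₁ : ℝ) (hC : 0 < C) (hε₁ : 0 < ε₁)
    (hf : ContDiffOn ℝ 2 f Ω)
    (hf2 : ∀ z ∈ Ω, ‖iteratedFDerivWithin ℝ 2 f Ω z‖ ≤ C)
    (x y : EuclideanSpace ℝ (Fin d)) (hx : x ∈ Ω) (hy : y ∈ Ω)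
    (hseg : segment ℝ y x ⊆ Ω) (hxy₁ : ‖x - y‖ ≤ ε₁) :
    ‖f x - f y - fderiv ℝ f y (x - y)‖ ≤ C * ε₁ * ‖x - y‖ := by
  have hca : ∀ z ∈ Ω, ContDiffAt ℝ 2 f z := fun z hz =>
    (hf.contDiffAt (hΩ.mem_nhds hz))
  -- second derivative bound, global version
  have hf2' : ∀ z ∈ Ω, ‖fderiv ℝ (fderiv ℝ f) z‖ ≤ C := by
    intro z hz
    have h1 : ‖iteratedFDeriv ℝ 2 f z‖ ≤ C := by
      rw [← iteratedFDerivWithin_of_isOpen 2 hΩ hz]; exact hf2 z hz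
    calc ‖fderiv ℝ (fderiv ℝ f) z‖
        = ‖iteratedFDeriv ℝ 0 (fderiv ℝ (fderiv ℝ f)) z‖ := by
          rw [norm_iteratedFDeriv_zero]
      _ = ‖iteratedFDeriv ℝ 1 (fderiv ℝ f) z‖ := norm_iteratedFDeriv_fderiv
      _ = ‖iteratedFDeriv ℝ 2 f z‖ := norm_iteratedFDeriv_fderiv
      _ ≤ C := h1
  -- the derivative is differentiable on Ω
  have hdf : ∀ z ∈ Ω, DifferentiableAt ℝ (fderiv ℝ f) z := by
    intro z hz
    have : ContDiffAt ℝ 1 (fderiv ℝ f) z := (hca z hz).fderiv_right (by norm_num)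
    exact this.differentiableAt (by norm_num)
  have hdf0 : ∀ z ∈ Ω, DifferentiableAt ℝ f z := fun z hz =>
    (hca z hz).differentiableAt (by norm_num)
  -- segment points are within ε₁ of y
  have hsegball : segment ℝ y x ⊆ Metric.closedBall y ε₁ := by
    apply (convex_closedBall y ε₁).segment_subset
    · simp [Metric.mem_closedBall, le_of_lt, dist_self]
      positivity
    · rw [Metric.mem_closedBall, dist_eq_norm]; exact hxy₁
  -- Lipschitz bound on fderiv over the segment
  have hy' : y ∈ segment ℝ y x := left_mem_segment ℝ y x
  have hx' : x ∈ segment ℝ y x := right_mem_segment ℝ y x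
  have hlip : ∀ z ∈ segment ℝ y x, ‖fderiv ℝ f z - fderiv ℝ f y‖ ≤ C * ε₁ := by
    intro z hz
    have key := (convex_segment y x).norm_image_sub_le_of_norm_fderiv_le
      (f := fderiv ℝ f) (C := C)
      (fun w hw => hdf w (hseg hw)) (fun w hw => hf2' w (hseg hw)) hy' hz
    have hzy : ‖z - y‖ ≤ ε₁ := by
      have := hsegball hz
      rwa [Metric.mem_closedBall, dist_eq_norm] at this
    calc ‖fderiv ℝ f z - fderiv ℝ f y‖ ≤ C * ‖z - y‖ := key
      _ ≤ C * ε₁ := by nlinarith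
  -- mean value inequality with reference derivative fderiv f y
  have := (convex_segment y x).norm_image_sub_le_of_norm_fderiv_le'
    (f := f) (φ := fderiv ℝ f y) (C := C * ε₁)
    (fun w hw => hdf0 w (hseg hw)) hlip hy' hx'
  exact this

/-- Gradient-approximation transfer via second-order Taylor expansion. -/
theorem stmt_8 (d : ℕ) (Ω : Set (EuclideanSpace ℝ (Fin d))) (hΩ : IsOpen Ω)
    (g h : EuclideanSpace ℝ (Fin d) → ℝ) (C ε₁ : ℝ) (hC : 0 < C) (hε₁ : 0 < ε₁)
    (hg : ContDiffOn ℝ 2 g Ω) (hh : ContDiffOn ℝ 2 h Ω)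
    (hg2 : ∀ z ∈ Ω, ‖iteratedFDerivWithin ℝ 2 g Ω z‖ ≤ C)
    (hh2 : ∀ z ∈ Ω, ‖iteratedFDerivWithin ℝ 2 h Ω z‖ ≤ C)
    (x y : EuclideanSpace ℝ (Fin d)) (hx : x ∈ Ω) (hy : y ∈ Ω)
    (hseg : segment ℝ y x ⊆ Ω)
    (hxy₁ : ‖x - y‖ ≤ ε₁) (hxy₂ : ε₁ / 2 ≤ ‖x - y‖)
    (hgy : |h y - g y| ≤ C * ε₁ ^ 2) (hgx : |h x - g x| ≤ C * ε₁ ^ 2)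
    (hcone : ⟪gradient h y - gradient g y, x - y⟫ ≥
      (1 / 2) * ‖gradient h y - gradient g y‖ * ‖x - y‖) :
    ‖gradient h y - gradient g y‖ ≤ 16 * C * ε₁ := by
  have Th := taylor_aux d Ω hΩ h C ε₁ hC hε₁ hh hh2 x y hx hy hseg hxy₁
  have Tg := taylor_aux d Ω hΩ g C ε₁ hC hε₁ hg hg2 x y hx hy hseg hxy₁
  -- gradient-to-fderiv identification
  have grad_apply : ∀ f : EuclideanSpace ℝ (Fin d) → ℝ,
      ⟪gradient f y, x - y⟫ = fderiv ℝ f y (x - y) := by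
    intro f
    rw [gradient, ← InnerProductSpace.toDual_apply_apply,
      LinearIsometryEquiv.apply_symm_apply]
  have hinner : ⟪gradient h y - gradient g y, x - y⟫
      = fderiv ℝ h y (x - y) - fderiv ℝ g y (x - y) := by
    rw [inner_sub_left, grad_apply h, grad_apply g]
  set N := ‖gradient h y - gradient g y‖ with hN
  have hNnonneg : 0 ≤ N := norm_nonneg _
  have habs : ∀ a : ℝ, ‖a‖ = |a| := fun a => Real.norm_eq_abs a
  rw [habs] at Th Tg
  have h1 : fderiv ℝ h y (x - y) - fderiv ℝ g y (x - y) ≤ 4 * C * ε₁ ^ 2 := by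
    have e1 : fderiv ℝ h y (x - y) - fderiv ℝ g y (x - y) =
        -(h x - h y - fderiv ℝ h y (x - y)) + (g x - g y - fderiv ℝ g y (x - y))
        + (h x - g x) - (h y - g y) := by ring
    have hTh := abs_le.mp (le_trans Th (by nlinarith [norm_nonneg (x - y), mul_pos hC hε₁]) :
      |h x - h y - fderiv ℝ h y (x - y)| ≤ C * ε₁ ^ 2)
    have hTg := abs_le.mp (le_trans Tg (by nlinarith [norm_nonneg (x - y), mul_pos hC hε₁]) :
      |g x - g y - fderiv ℝ g y (x - y)| ≤ C * ε₁ ^ 2)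
    have hgy' := abs_le.mp hgy
    have hgx' := abs_le.mp hgx
    rw [e1]; linarith [hTh.1, hTh.2, hTg.1, hTg.2, hgy'.1, hgy'.2, hgx'.1, hgx'.2]
  have h2 : (1 / 2) * N * (ε₁ / 2) ≤ 4 * C * ε₁ ^ 2 := by
    calc (1 / 2) * N * (ε₁ / 2) ≤ (1 / 2) * N * ‖x - y‖ := by nlinarith
      _ ≤ ⟪gradient h y - gradient g y, x - y⟫ := hcone
      _ = fderiv ℝ h y (x - y) - fderiv ℝ g y (x - y) := hinner
      _ ≤ 4 * C * ε₁ ^ 2 := h1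
  nlinarith
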